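/- Let (E,C) be a locally finite bipartite separated graph with s(E^1)=E^{0,0} and r(E^1)=E^{0,1}, and identify LW(E,C) with the corner W L(E,C) W of L(E,C) via p_w↦w and ρ(e,f)↦e*f. Let J be the two-sided ideal of L(E,C) generated by all commutators [ee*, ff*] with e,f∈E^1. Then J ∩ LW(E,C) equals the two-sided *-ideal I of LW(E,C) generated by the elements ρ(e,f)ρ(f,g)ρ(g,h) − ρ(e,g)ρ(g,f)ρ(f,h) over all e,f,g,h∈E^1 with s(e)=s(f)=s(g)=s(h), where one sets ρ(e,f):=δ_{e,f}r(e) whenever X_e=X_f. -/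

import Mathlib

open Sum

noncomputable section
open scoped Classical

/-- A bipartite separated graph. -/
structure BipSepGraph where
  V0 : Type
  V1 : Type
  E : Type
  s : E → V0
  r : E → V1
  c : E → E → Prop
  c_equiv : Equivalence c
  c_src : ∀ {e f}, c e f → s e = s f
  rowFinite : ∀ v : V0, {e | s e = v}.Finite

namespace BipSepGraph

lemma classSet_finite (G : BipSepGraph) (e : G.E) : {f | G.c e f}.Finite :=
  (G.rowFinite (G.s e)).subset (fun _ hf => (G.c_src hf).symm)

/-- The finite set of edges in the same member of the partition `C` as `e`. -/
def classFinset (G : BipSepGraph) (e : G.E) : Finset G.E :=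
  (G.classSet_finite e).toFinset

end BipSepGraph

variable (K : Type) [Field K] [StarRing K]

/-- A representation of the relations defining the Leavitt path algebra `L(E,C)` of a
separated graph in a (nonunital) `*`-algebra. -/
structure LPARep (G : BipSepGraph) (A : Type) [NonUnitalRing A] [Module K A]
    [SMulCommClass K A A] [IsScalarTower K A A] [StarRing A] [StarModule K A] where
  pv : G.V0 ⊕ G.V1 → A
  ge : G.E → A
  pv_star : ∀ u, star (pv u) = pv u
  pv_idem : ∀ u, pv u * pv u = pv u
  pv_orth : ∀ u u', u ≠ u' → pv u * pv u' = 0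
  src_mul : ∀ e, pv (inl (G.s e)) * ge e = ge e
  mul_rng : ∀ e, ge e * pv (inr (G.r e)) = ge e
  sck1 : ∀ e f, G.c e f → star (ge e) * ge f = if e = f then pv (inr (G.r e)) else 0
  sck2 : ∀ e, ∑ f ∈ G.classFinset e, ge f * star (ge f) = pv (inl (G.s e))

/-- `L` (with the representation `ρ`) *is* the Leavitt path algebra `L(E,C)`:
it satisfies the universal property among all `*`-algebras over `K`. -/
def IsLPA (G : BipSepGraph) (L : Type) [NonUnitalRing L] [Module K L]
    [SMulCommClass K L L] [IsScalarTower K L L] [StarRing L] [StarModule K L]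
    (ρ : LPARep K G L) : Prop :=
  ∀ (A : Type) [NonUnitalRing A] [Module K A] [SMulCommClass K A A] [IsScalarTower K A A]
    [StarRing A] [StarModule K A] (σ : LPARep K G A),
    ∃! φ : L →⋆ₙₐ[K] A, (∀ u, φ (ρ.pv u) = σ.pv u) ∧ (∀ e, φ (ρ.ge e) = σ.ge e)

/-- A representation of the relations defining the upper Leavitt path algebra `LV(E,C)`
of a bipartite separated graph.  The generator `τ(e,f)` (for `r e = r f`) is `tau e f`;
values of `tau` at pairs with `r e ≠ r f` are irrelevant. -/
structure LVRep (G : BipSepGraph) (A : Type) [NonUnitalRing A] [Module K A]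
    [SMulCommClass K A A] [IsScalarTower K A A] [StarRing A] [StarModule K A] where
  pv : G.V0 → A
  tau : G.E → G.E → A
  pv_star : ∀ v, star (pv v) = pv v
  pv_idem : ∀ v, pv v * pv v = pv v
  pv_orth : ∀ v v', v ≠ v' → pv v * pv v' = 0
  tau_star : ∀ e f, G.r e = G.r f → star (tau e f) = tau f e
  tau_right : ∀ e f, G.r e = G.r f → tau e f * pv (G.s f) = tau e f
  tau_left : ∀ e f, G.r e = G.r f → pv (G.s e) * tau e f = tau e f
  sck1 : ∀ e f g h, G.r e = G.r f → G.r g = G.r h → G.c f g →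
    tau e f * tau g h = if f = g then tau e h else 0
  sck2 : ∀ g : G.E, ∑ e ∈ G.classFinset g, tau e e = pv (G.s g)

/-- `L` (with the representation `ρ`) *is* the upper Leavitt path algebra `LV(E,C)`. -/
def IsLV (G : BipSepGraph) (L : Type) [NonUnitalRing L] [Module K L]
    [SMulCommClass K L L] [IsScalarTower K L L] [StarRing L] [StarModule K L]
    (ρ : LVRep K G L) : Prop :=
  ∀ (A : Type) [NonUnitalRing A] [Module K A] [SMulCommClass K A A] [IsScalarTower K A A]
    [StarRing A] [StarModule K A] (σ : LVRep K G A),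
    ∃! φ : L →⋆ₙₐ[K] A, (∀ v, φ (ρ.pv v) = σ.pv v) ∧
      (∀ e f, G.r e = G.r f → φ (ρ.tau e f) = σ.tau e f)

/-- A representation of the relations defining the lower Leavitt path algebra `LW(E,C)`
of a bipartite separated graph.  The generator `ρ(e,f)` (for `s e = s f`, `X_e ≠ X_f`)
is `rho e f`; the values of `rho` at other pairs are irrelevant. -/
structure LWRep (G : BipSepGraph) (A : Type) [NonUnitalRing A] [Module K A]
    [SMulCommClass K A A] [IsScalarTower K A A] [StarRing A] [StarModule K A] where
  pw : G.V1 → A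
  rho : G.E → G.E → A
  pw_star : ∀ w, star (pw w) = pw w
  pw_idem : ∀ w, pw w * pw w = pw w
  pw_orth : ∀ w w', w ≠ w' → pw w * pw w' = 0
  rho_star : ∀ e f, G.s e = G.s f → ¬ G.c e f → star (rho e f) = rho f e
  rho_right : ∀ e f, G.s e = G.s f → ¬ G.c e f → rho e f * pw (G.r f) = rho e f
  rho_left : ∀ e f, G.s e = G.s f → ¬ G.c e f → pw (G.r e) * rho e f = rho e f
  sck1 : ∀ e h g, G.s e = G.s h → G.s g = G.s e → ¬ G.c g e → ¬ G.c g h →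
    (∑ f ∈ G.classFinset g, rho e f * rho f h) =
      if G.c e h then (if e = h then pw (G.r e) else 0) else rho e h

/-- `L` (with the representation `ρ`) *is* the lower Leavitt path algebra `LW(E,C)`. -/
def IsLW (G : BipSepGraph) (L : Type) [NonUnitalRing L] [Module K L]
    [SMulCommClass K L L] [IsScalarTower K L L] [StarRing L] [StarModule K L]
    (ρ : LWRep K G L) : Prop :=
  ∀ (A : Type) [NonUnitalRing A] [Module K A] [SMulCommClass K A A] [IsScalarTower K A A]
    [StarRing A] [StarModule K A] (σ : LWRep K G A),
    ∃! φ : L →⋆ₙₐ[K] A, (∀ w, φ (ρ.pw w) = σ.pw w) ∧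
      (∀ e f, G.s e = G.s f → ¬ G.c e f → φ (ρ.rho e f) = σ.rho e f)


/-- The extended generators `ρ(e,f)` of `LW(E,C)`, where one sets
`ρ(e,f) := δ_{e,f} r(e)` whenever `X_e = X_f`. -/
def LWRep.rhoExt {G : BipSepGraph} {A : Type} [NonUnitalRing A] [Module K A]
    [SMulCommClass K A A] [IsScalarTower K A A] [StarRing A] [StarModule K A]
    (σ : LWRep K G A) (e f : G.E) : A :=
  if G.c e f then (if e = f then σ.pw (G.r e) else 0) else σ.rho e f
section Aux
set_option linter.unusedSectionVars false
variable {K}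

variable {G : BipSepGraph}
variable {L : Type} [NonUnitalRing L] [Module K L] [SMulCommClass K L L]
  [IsScalarTower K L L] [StarRing L] [StarModule K L]
variable {LW : Type} [NonUnitalRing LW] [Module K LW] [SMulCommClass K LW LW]
  [IsScalarTower K LW LW] [StarRing LW] [StarModule K LW]

/-- Nested span induction: pairwise products land in `M`. -/
lemma span_pair_mul {M : Submodule K L} {s t : Set L}
    (h : ∀ x ∈ s, ∀ y ∈ t, x * y ∈ M) :
    ∀ {a : L}, a ∈ Submodule.span K s → ∀ {b : L}, b ∈ Submodule.span K t → a * b ∈ M := by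
  intro a ha
  refine Submodule.span_induction
    (p := fun a _ => ∀ {b : L}, b ∈ Submodule.span K t → a * b ∈ M) ?_ ?_ ?_ ?_ ha
  · intro x hx b hb
    refine Submodule.span_induction (p := fun b _ => x * b ∈ M) ?_ ?_ ?_ ?_ hb
    · exact fun y hy => h x hx y hy
    · simpa using M.zero_mem
    · intro y z _ _ hy hz; rw [mul_add]; exact M.add_mem hy hz
    · intro k y _ hy; rw [mul_smul_comm]; exact M.smul_mem k hy
  · intro b _; simpa using M.zero_mem
  · intro x y _ _ hx hy b hb; rw [add_mul]; exact M.add_mem (hx hb) (hy hb)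
  · intro k x _ hx b hb; rw [smul_mul_assoc]; exact M.smul_mem k (hx hb)

lemma span_sandwich {M : Submodule K L} {s t : Set L} {c : L}
    (h : ∀ x ∈ s, ∀ y ∈ t, x * c * y ∈ M) :
    ∀ {a : L}, a ∈ Submodule.span K s → ∀ {b : L}, b ∈ Submodule.span K t →
      a * c * b ∈ M := by
  intro a ha
  refine Submodule.span_induction
    (p := fun a _ => ∀ {b : L}, b ∈ Submodule.span K t → a * c * b ∈ M) ?_ ?_ ?_ ?_ ha
  · intro x hx b hb
    refine Submodule.span_induction (p := fun b _ => x * c * b ∈ M) ?_ ?_ ?_ ?_ hb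
    · exact fun y hy => h x hx y hy
    · simpa using M.zero_mem
    · intro y z _ _ hy hz; rw [mul_add]; exact M.add_mem hy hz
    · intro k y _ hy; rw [mul_smul_comm]; exact M.smul_mem k hy
  · intro b _; simpa using M.zero_mem
  · intro x y _ _ hx hy b hb; rw [add_mul, add_mul]; exact M.add_mem (hx hb) (hy hb)
  · intro k x _ hx b hb; rw [smul_mul_assoc, smul_mul_assoc]; exact M.smul_mem k (hx hb)

namespace LPARep

variable (ρ : LPARep K G L)

lemma pv_il_ir (v : G.V0) (u : G.V1) : ρ.pv (inl v) * ρ.pv (inr u) = 0 :=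
  ρ.pv_orth _ _ (by simp)

lemma pv_ir_il (u : G.V1) (v : G.V0) : ρ.pv (inr u) * ρ.pv (inl v) = 0 :=
  ρ.pv_orth _ _ (by simp)

lemma star_ge_pv (e : G.E) : star (ρ.ge e) * ρ.pv (inl (G.s e)) = star (ρ.ge e) := by
  have := congrArg star (ρ.src_mul e)
  rwa [star_mul, ρ.pv_star] at this

lemma pv_star_ge (e : G.E) : ρ.pv (inr (G.r e)) * star (ρ.ge e) = star (ρ.ge e) := by
  have := congrArg star (ρ.mul_rng e)
  rwa [star_mul, ρ.pv_star] at this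

lemma ge_pv_inl (e : G.E) (v : G.V0) : ρ.ge e * ρ.pv (inl v) = 0 := by
  rw [← ρ.mul_rng e, mul_assoc, ρ.pv_ir_il, mul_zero]

lemma pv_inr_ge (u : G.V1) (e : G.E) : ρ.pv (inr u) * ρ.ge e = 0 := by
  rw [← ρ.src_mul e, ← mul_assoc, ρ.pv_ir_il, zero_mul]

lemma star_ge_pv_inr (e : G.E) (u : G.V1) : star (ρ.ge e) * ρ.pv (inr u) = 0 := by
  rw [← ρ.star_ge_pv e, mul_assoc, ρ.pv_il_ir, mul_zero]

lemma pv_inl_star_ge (v : G.V0) (e : G.E) : ρ.pv (inl v) * star (ρ.ge e) = 0 := by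
  rw [← ρ.pv_star_ge e, ← mul_assoc, ρ.pv_il_ir, zero_mul]

end LPARep

namespace LWRep

variable (σ : LWRep K G LW)

lemma rhoExt_star (e f : G.E) (h : G.s e = G.s f) :
    star (σ.rhoExt K e f) = σ.rhoExt K f e := by
  unfold LWRep.rhoExt
  by_cases hc : G.c e f
  · have hc' : G.c f e := G.c_equiv.symm hc
    by_cases hef : e = f
    · subst hef; simp [hc, σ.pw_star]
    · simp [hc, hc', hef, Ne.symm hef]
  · have hc' : ¬ G.c f e := fun h' => hc (G.c_equiv.symm h')
    simp only [if_neg hc, if_neg hc']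
    exact σ.rho_star e f h hc

lemma pw_rhoExt (e f : G.E) (h : G.s e = G.s f) :
    σ.pw (G.r e) * σ.rhoExt K e f = σ.rhoExt K e f := by
  unfold LWRep.rhoExt
  by_cases hc : G.c e f
  · by_cases hef : e = f
    · subst hef; simp [hc, σ.pw_idem]
    · simp [hc, hef]
  · simp only [if_neg hc]; exact σ.rho_left e f h hc

lemma rhoExt_pw (e f : G.E) (h : G.s e = G.s f) :
    σ.rhoExt K e f * σ.pw (G.r f) = σ.rhoExt K e f := by
  unfold LWRep.rhoExt
  by_cases hc : G.c e f
  · by_cases hef : e = f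
    · subst hef; simp [hc, σ.pw_idem]
    · simp [hc, hef]
  · simp only [if_neg hc]; exact σ.rho_right e f h hc

end LWRep

/-- The image of the extended generators under the corner identification. -/
lemma rhoExt_phi {ρ : LPARep K G L} {σ : LWRep K G LW} {φ : LW →⋆ₙₐ[K] L}
    (hφw : ∀ w : G.V1, φ (σ.pw w) = ρ.pv (Sum.inr w))
    (hφρ : ∀ e f, G.s e = G.s f → ¬ G.c e f → φ (σ.rho e f) = star (ρ.ge e) * ρ.ge f)
    (e f : G.E) (h : G.s e = G.s f) :
    φ (σ.rhoExt K e f) = star (ρ.ge e) * ρ.ge f := by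
  unfold LWRep.rhoExt
  by_cases hc : G.c e f
  · by_cases hef : e = f
    · subst hef
      rw [if_pos hc, if_pos rfl, hφw, ρ.sck1 e e (G.c_equiv.refl e), if_pos rfl]
    · rw [if_pos hc, if_neg hef, map_zero, ρ.sck1 e f hc, if_neg hef]
  · rw [if_neg hc]; exact hφρ e f h hc

end Aux
section Aux2
set_option linter.unusedSectionVars false
variable {K}
variable {G : BipSepGraph}
variable {L : Type} [NonUnitalRing L] [Module K L] [SMulCommClass K L L]
  [IsScalarTower K L L] [StarRing L] [StarModule K L]

/-- `L(E,C)` is generated, as a non-unital `*`-algebra, by the canonical generators. -/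
lemma LPARep.adjoin_top (ρ : LPARep K G L) (hL : IsLPA K G L ρ) (a : L) :
    a ∈ NonUnitalStarAlgebra.adjoin K (Set.range ρ.pv ∪ Set.range ρ.ge) := by
  set S := NonUnitalStarAlgebra.adjoin K (Set.range ρ.pv ∪ Set.range ρ.ge) with hS
  have hpv : ∀ u, ρ.pv u ∈ S := fun u =>
    NonUnitalStarAlgebra.subset_adjoin K _ (Or.inl ⟨u, rfl⟩)
  have hge : ∀ e, ρ.ge e ∈ S := fun e =>
    NonUnitalStarAlgebra.subset_adjoin K _ (Or.inr ⟨e, rfl⟩)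
  let σ₀ : LPARep K G S :=
  { pv := fun u => ⟨ρ.pv u, hpv u⟩
    ge := fun e => ⟨ρ.ge e, hge e⟩
    pv_star := fun u => Subtype.ext (by simpa using ρ.pv_star u)
    pv_idem := fun u => Subtype.ext (by simpa using ρ.pv_idem u)
    pv_orth := fun u u' h => Subtype.ext (by simpa using ρ.pv_orth u u' h)
    src_mul := fun e => Subtype.ext (by simpa using ρ.src_mul e)
    mul_rng := fun e => Subtype.ext (by simpa using ρ.mul_rng e)
    sck1 := fun e f hc => Subtype.ext (by
      by_cases hef : e = f <;>
        simpa [hef] using ρ.sck1 e f hc)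
    sck2 := fun e => Subtype.ext (by
      have := ρ.sck2 e
      simpa using this) }
  obtain ⟨ψ, hψ, -⟩ := hL S σ₀
  obtain ⟨θ, -, hθuniq⟩ := hL L ρ
  have h1 : (NonUnitalStarSubalgebraClass.subtype S).comp ψ = NonUnitalStarAlgHom.id K L := by
    have e1 := hθuniq ((NonUnitalStarSubalgebraClass.subtype S).comp ψ)
      ⟨fun u => by simp [hψ.1 u, NonUnitalStarSubalgebraClass.subtype]; rfl,
       fun e => by simp [hψ.2 e, NonUnitalStarSubalgebraClass.subtype]; rfl⟩
    have e2 := hθuniq (NonUnitalStarAlgHom.id K L) ⟨fun u => rfl, fun e => rfl⟩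
    rw [e1, e2]
  have : (NonUnitalStarSubalgebraClass.subtype S) (ψ a) = a := by
    have := DFunLike.congr_fun h1 a
    simpa using this
  rw [← this]
  exact (ψ a).2

end Aux2
section Aux3
set_option linter.unusedSectionVars false
variable {K}
variable {G : BipSepGraph}
variable {L : Type} [NonUnitalRing L] [Module K L] [SMulCommClass K L L]
  [IsScalarTower K L L] [StarRing L] [StarModule K L]
variable {LW : Type} [NonUnitalRing LW] [Module K LW] [SMulCommClass K LW LW]
  [IsScalarTower K LW LW] [StarRing LW] [StarModule K LW]

variable (ρ : LPARep K G L) (φ : LW →⋆ₙₐ[K] L)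

/-- Corner `W L V`. -/
def T10 (v : G.V0) : Set L :=
  {z | ∃ (x : LW) (e : G.E), G.s e = v ∧ z = φ x * star (ρ.ge e)}

/-- Corner `V L W`. -/
def T01 (v : G.V0) : Set L :=
  {z | ∃ (x : LW) (e : G.E), G.s e = v ∧ z = ρ.ge e * φ x}

/-- Corner `V L V`. -/
def T00 (v v' : G.V0) : Set L :=
  {z | ∃ (x : LW) (e f : G.E), G.s e = v ∧ G.s f = v' ∧
    z = ρ.ge e * φ x * star (ρ.ge f)}

variable {ρ φ}

lemma corners (σ : LWRep K G LW)
    (hs : Function.Surjective G.s)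
    (hrange : Set.range ⇑φ = (Submodule.span K
      {x : L | ∃ (u w : G.V1) (a : L), x = ρ.pv (Sum.inr u) * a * ρ.pv (Sum.inr w)} :
        Submodule K L))
    (hφw : ∀ w : G.V1, φ (σ.pw w) = ρ.pv (Sum.inr w))
    (hφρ : ∀ e f, G.s e = G.s f → ¬ G.c e f → φ (σ.rho e f) = star (ρ.ge e) * ρ.ge f)
    (htop : ∀ a : L, a ∈ NonUnitalStarAlgebra.adjoin K (Set.range ρ.pv ∪ Set.range ρ.ge))
    (a : L) :
    (∀ u v, ρ.pv (inr u) * a * ρ.pv (inl v) ∈ Submodule.span K (T10 ρ φ v)) ∧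
    (∀ v w, ρ.pv (inl v) * a * ρ.pv (inr w) ∈ Submodule.span K (T01 ρ φ v)) ∧
    (∀ v v', ρ.pv (inl v) * a * ρ.pv (inl v') ∈ Submodule.span K (T00 ρ φ v v')) := by
  classical
  -- `W L W` is the range of `φ`
  have corner11 : ∀ (y : L) (u w : G.V1),
      ρ.pv (inr u) * y * ρ.pv (inr w) ∈ Set.range ⇑φ := by
    intro y u w
    rw [hrange]
    exact Submodule.subset_span ⟨u, w, y, rfl⟩
  have hRE : ∀ e f : G.E, G.s e = G.s f →
      φ (σ.rhoExt K e f) = star (ρ.ge e) * ρ.ge f := rhoExt_phi hφw hφρ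
  -- product rules
  have prod_10_00 : ∀ v₀ v : G.V0, ∀ x' ∈ T10 ρ φ v₀, ∀ y' ∈ T00 ρ φ v₀ v,
      x' * y' ∈ Submodule.span K (T10 ρ φ v) := by
    rintro v₀ v _ ⟨x, e, he, rfl⟩ _ ⟨y, f, g, hf, hg, rfl⟩
    refine Submodule.subset_span ⟨x * σ.rhoExt K e f * y, g, hg, ?_⟩
    rw [map_mul, map_mul, hRE e f (by rw [he, hf])]
    simp only [mul_assoc]
  have prod_W_10 : ∀ v : G.V0, ∀ x' ∈ Set.range ⇑φ, ∀ y' ∈ T10 ρ φ v,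
      x' * y' ∈ Submodule.span K (T10 ρ φ v) := by
    rintro v _ ⟨y, rfl⟩ _ ⟨x, e, he, rfl⟩
    refine Submodule.subset_span ⟨y * x, e, he, ?_⟩
    rw [map_mul]
    simp only [mul_assoc]
  have prod_00_01 : ∀ v v₀ : G.V0, ∀ x' ∈ T00 ρ φ v v₀, ∀ y' ∈ T01 ρ φ v₀,
      x' * y' ∈ Submodule.span K (T01 ρ φ v) := by
    rintro v v₀ _ ⟨x, e, f, he, hf, rfl⟩ _ ⟨y, g, hg, rfl⟩
    refine Submodule.subset_span ⟨x * σ.rhoExt K f g * y, e, he, ?_⟩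
    rw [map_mul, map_mul, hRE f g (by rw [hf, hg])]
    simp only [mul_assoc]
  have prod_01_W : ∀ v : G.V0, ∀ x' ∈ T01 ρ φ v, ∀ y' ∈ Set.range ⇑φ,
      x' * y' ∈ Submodule.span K (T01 ρ φ v) := by
    rintro v _ ⟨x, e, he, rfl⟩ _ ⟨y, rfl⟩
    refine Submodule.subset_span ⟨x * y, e, he, ?_⟩
    rw [map_mul]
    simp only [mul_assoc]
  have prod_00_00 : ∀ v v₀ v' : G.V0, ∀ x' ∈ T00 ρ φ v v₀, ∀ y' ∈ T00 ρ φ v₀ v',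
      x' * y' ∈ Submodule.span K (T00 ρ φ v v') := by
    rintro v v₀ v' _ ⟨x, e, f, he, hf, rfl⟩ _ ⟨y, g, h, hg, hh, rfl⟩
    refine Submodule.subset_span ⟨x * σ.rhoExt K f g * y, e, h, he, hh, ?_⟩
    rw [map_mul, map_mul, hRE f g (by rw [hf, hg])]
    simp only [mul_assoc]
  have prod_01_10 : ∀ v v' : G.V0, ∀ x' ∈ T01 ρ φ v, ∀ y' ∈ T10 ρ φ v',
      x' * y' ∈ Submodule.span K (T00 ρ φ v v') := by
    rintro v v' _ ⟨x, e, he, rfl⟩ _ ⟨y, f, hf, rfl⟩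
    refine Submodule.subset_span ⟨x * y, e, f, he, hf, ?_⟩
    rw [map_mul]
    simp only [mul_assoc]
  -- membership of `pv (inl v)` in the diagonal corner
  have pv_mem_00 : ∀ v : G.V0, ρ.pv (inl v) ∈ Submodule.span K (T00 ρ φ v v) := by
    intro v
    obtain ⟨e, rfl⟩ := hs v
    rw [← ρ.sck2 e]
    refine Submodule.sum_mem _ ?_
    intro f hf
    have hcf : G.c e f := by
      simpa [BipSepGraph.classFinset, Set.Finite.mem_toFinset] using hf
    have hsf : G.s f = G.s e := (G.c_src hcf).symm
    refine Submodule.subset_span ⟨σ.pw (G.r f), f, f, hsf, hsf, ?_⟩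
    rw [hφw, ρ.mul_rng]
  -- auxiliary orthogonality computations
  have haux1 : ∀ (z : G.V0 ⊕ G.V1) (v : G.V0),
      ρ.pv z * ρ.pv (inl v) = if z = inl v then ρ.pv (inl v) else 0 := by
    intro z v
    by_cases h : z = inl v
    · subst h; simp [ρ.pv_idem]
    · simp [h, ρ.pv_orth _ _ h]
  have haux2 : ∀ (z : G.V0 ⊕ G.V1) (w : G.V1),
      ρ.pv z * ρ.pv (inr w) = if z = inr w then ρ.pv (inr w) else 0 := by
    intro z w
    by_cases h : z = inr w
    · subst h; simp [ρ.pv_idem]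
    · simp [h, ρ.pv_orth _ _ h]
  -- the predicate for the monomial induction
  set Pc : L → Prop := fun m =>
    (∀ u v, ρ.pv (inr u) * m * ρ.pv (inl v) ∈ Submodule.span K (T10 ρ φ v)) ∧
    (∀ v w, ρ.pv (inl v) * m * ρ.pv (inr w) ∈ Submodule.span K (T01 ρ φ v)) ∧
    (∀ v v', ρ.pv (inl v) * m * ρ.pv (inl v') ∈ Submodule.span K (T00 ρ φ v v')) with hPc
  set Q : L → Prop := fun m =>
    Pc m ∧ (∃ z, ρ.pv z * m = m) ∧ (∃ z, m * ρ.pv z = m) with hQ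
  -- base cases
  have base_pv : ∀ z, Q (ρ.pv z) := by
    intro z
    refine ⟨⟨?_, ?_, ?_⟩, ⟨z, ρ.pv_idem z⟩, ⟨z, ρ.pv_idem z⟩⟩
    · intro u v
      rw [mul_assoc, haux1]
      split_ifs with h
      · subst h; rw [ρ.pv_ir_il]; exact Submodule.zero_mem _
      · rw [mul_zero]; exact Submodule.zero_mem _
    · intro v w
      rw [mul_assoc, haux2]
      split_ifs with h
      · subst h; rw [ρ.pv_il_ir]; exact Submodule.zero_mem _
      · rw [mul_zero]; exact Submodule.zero_mem _
    · intro v v'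
      rw [mul_assoc, haux1]
      split_ifs with h
      · subst h
        rw [haux1]
        split_ifs with h2
        · cases h2; exact pv_mem_00 v
        · exact Submodule.zero_mem _
      · rw [mul_zero]; exact Submodule.zero_mem _
  have base_ge : ∀ e, Q (ρ.ge e) := by
    intro e
    refine ⟨⟨?_, ?_, ?_⟩, ⟨inl (G.s e), ρ.src_mul e⟩, ⟨inr (G.r e), ρ.mul_rng e⟩⟩
    · intro u v
      rw [ρ.pv_inr_ge, zero_mul]; exact Submodule.zero_mem _
    · intro v w
      by_cases hv : G.s e = v
      · by_cases hw : G.r e = w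
        · subst hv; subst hw
          rw [ρ.src_mul, ρ.mul_rng]
          exact Submodule.subset_span ⟨σ.pw (G.r e), e, rfl, by rw [hφw, ρ.mul_rng]⟩
        · have h0 : ρ.ge e * ρ.pv (inr w) = 0 := by
            conv_lhs => rw [← ρ.mul_rng e]
            rw [mul_assoc, haux2, if_neg (by simpa using hw), mul_zero]
          rw [mul_assoc, h0, mul_zero]
          exact Submodule.zero_mem _
      · have h0 : ρ.pv (inl v) * ρ.ge e = 0 := by
          conv_lhs => rw [← ρ.src_mul e]
          rw [← mul_assoc, haux1, if_neg (by simpa using fun h => hv h.symm), zero_mul]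
        rw [h0, zero_mul]
        exact Submodule.zero_mem _
    · intro v v'
      rw [mul_assoc, ρ.ge_pv_inl, mul_zero]; exact Submodule.zero_mem _
  have base_sge : ∀ e, Q (star (ρ.ge e)) := by
    intro e
    refine ⟨⟨?_, ?_, ?_⟩, ⟨inr (G.r e), ρ.pv_star_ge e⟩, ⟨inl (G.s e), ρ.star_ge_pv e⟩⟩
    · intro u v
      by_cases hu : G.r e = u
      · by_cases hv : G.s e = v
        · subst hu; subst hv
          rw [ρ.pv_star_ge, ρ.star_ge_pv]
          exact Submodule.subset_span ⟨σ.pw (G.r e), e, rfl, by rw [hφw, ρ.pv_star_ge]⟩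
        · have h0 : star (ρ.ge e) * ρ.pv (inl v) = 0 := by
            conv_lhs => rw [← ρ.star_ge_pv e]
            rw [mul_assoc, haux1, if_neg (by simpa using hv), mul_zero]
          rw [mul_assoc, h0, mul_zero]
          exact Submodule.zero_mem _
      · have h0 : ρ.pv (inr u) * star (ρ.ge e) = 0 := by
          conv_lhs => rw [← ρ.pv_star_ge e]
          rw [← mul_assoc, haux2, if_neg (by simpa using fun h => hu h.symm), zero_mul]
        rw [h0, zero_mul]
        exact Submodule.zero_mem _
    · intro v w
      rw [ρ.pv_inl_star_ge, zero_mul]; exact Submodule.zero_mem _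
    · intro v v'
      rw [ρ.pv_inl_star_ge, zero_mul]; exact Submodule.zero_mem _
  -- monomials satisfy `Q`
  have hmono : ∀ m ∈ Subsemigroup.closure
      ((Set.range ρ.pv ∪ Set.range ρ.ge) ∪ star (Set.range ρ.pv ∪ Set.range ρ.ge)), Q m := by
    intro m hm
    refine Subsemigroup.closure_induction (p := fun m _ => Q m) ?_ ?_ hm
    · -- generators
      rintro x (hx | hx)
      · rcases hx with ⟨u, rfl⟩ | ⟨e, rfl⟩
        · exact base_pv u
        · exact base_ge e
      · rw [Set.mem_star] at hx
        rcases hx with ⟨u, hu⟩ | ⟨e, he⟩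
        · have : x = ρ.pv u := by rw [← star_star x, ← hu, ρ.pv_star]
          rw [this]; exact base_pv u
        · have : x = star (ρ.ge e) := by rw [← star_star x, ← he]
          rw [this]; exact base_sge e
    · -- products
      rintro x y _ _ ⟨hPx, hlx, hrx⟩ ⟨hPy, hly, hry⟩
      obtain ⟨z, hz⟩ := hly
      have split : ∀ Pl Pr : L,
          Pl * (x * y) * Pr = (Pl * x * ρ.pv z) * (ρ.pv z * y * Pr) := by
        intro Pl Pr
        have h2 : ρ.pv z * (y * Pr) = y * Pr := by rw [← mul_assoc, hz]
        simp only [mul_assoc, h2]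
      refine ⟨⟨?_, ?_, ?_⟩, ?_, ?_⟩
      · intro u v
        rw [split]
        rcases z with v₀ | u₀
        · exact span_pair_mul (prod_10_00 v₀ v) (hPx.1 u v₀) (hPy.2.2 v₀ v)
        · exact span_pair_mul (prod_W_10 v)
            (Submodule.subset_span (corner11 x u u₀)) (hPy.1 u₀ v)
      · intro v w
        rw [split]
        rcases z with v₀ | u₀
        · exact span_pair_mul (prod_00_01 v v₀) (hPx.2.2 v v₀) (hPy.2.1 v₀ w)
        · exact span_pair_mul (prod_01_W v) (hPx.2.1 v u₀)
            (Submodule.subset_span (corner11 y u₀ w))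
      · intro v v'
        rw [split]
        rcases z with v₀ | u₀
        · exact span_pair_mul (prod_00_00 v v₀ v') (hPx.2.2 v v₀) (hPy.2.2 v₀ v')
        · exact span_pair_mul (prod_01_10 v v') (hPx.2.1 v u₀) (hPy.1 u₀ v')
      · obtain ⟨z', hz'⟩ := hlx
        exact ⟨z', by rw [← mul_assoc, hz']⟩
      · obtain ⟨z', hz'⟩ := hry
        exact ⟨z', by rw [mul_assoc, hz']⟩
  -- extend to all of `L` by linearity
  have ha : a ∈ Submodule.span K
      ((Subsemigroup.closure ((Set.range ρ.pv ∪ Set.range ρ.ge) ∪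
        star (Set.range ρ.pv ∪ Set.range ρ.ge)) : Subsemigroup L) : Set L) := by
    rw [← NonUnitalStarAlgebra.adjoin_eq_span]
    exact htop a
  refine Submodule.span_induction (p := fun a _ => Pc a) ?_ ?_ ?_ ?_ ha
  · intro x hx
    exact (hmono x hx).1
  · refine ⟨?_, ?_, ?_⟩ <;>
      · intro _ _; simp only [mul_zero, zero_mul]; exact Submodule.zero_mem _
  · rintro x y _ _ ⟨h1, h2, h3⟩ ⟨g1, g2, g3⟩
    refine ⟨?_, ?_, ?_⟩ <;> intro s t
    · have := Submodule.add_mem _ (h1 s t) (g1 s t)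
      rwa [← add_mul, ← mul_add] at this
    · have := Submodule.add_mem _ (h2 s t) (g2 s t)
      rwa [← add_mul, ← mul_add] at this
    · have := Submodule.add_mem _ (h3 s t) (g3 s t)
      rwa [← add_mul, ← mul_add] at this
  · rintro k x _ ⟨h1, h2, h3⟩
    refine ⟨?_, ?_, ?_⟩ <;> intro s t
    · have := Submodule.smul_mem _ k (h1 s t)
      rwa [← smul_mul_assoc, ← mul_smul_comm] at this
    · have := Submodule.smul_mem _ k (h2 s t)
      rwa [← smul_mul_assoc, ← mul_smul_comm] at this
    · have := Submodule.smul_mem _ k (h3 s t)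
      rwa [← smul_mul_assoc, ← mul_smul_comm] at this

end Aux3
section Aux4
set_option linter.unusedSectionVars false
variable {K}
variable {G : BipSepGraph}
variable {LW : Type} [NonUnitalRing LW] [Module K LW] [SMulCommClass K LW LW]
  [IsScalarTower K LW LW] [StarRing LW] [StarModule K LW]

/-- The generating set of the `*`-ideal `I`. -/
def Sgen (σ : LWRep K G LW) : Set LW :=
  {z : LW | ∃ e f g h : G.E,
    G.s e = G.s f ∧ G.s f = G.s g ∧ G.s g = G.s h ∧
    z = σ.rhoExt K e f * σ.rhoExt K f g * σ.rhoExt K g h -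
      σ.rhoExt K e g * σ.rhoExt K g f * σ.rhoExt K f h}

variable {σ : LWRep K G LW}

lemma Sgen_star : ∀ z ∈ Sgen σ, star z ∈ Sgen σ := by
  rintro _ ⟨e, f, g, h, h1, h2, h3, rfl⟩
  refine ⟨h, g, f, e, h3.symm, h2.symm, h1.symm, ?_⟩
  simp only [star_sub, star_mul]
  rw [σ.rhoExt_star e f h1, σ.rhoExt_star f g h2, σ.rhoExt_star g h h3,
    σ.rhoExt_star e g (h1.trans h2), σ.rhoExt_star g f h2.symm,
    σ.rhoExt_star f h (h2.trans h3)]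
  simp only [mul_assoc]

lemma Sgen_pw_left : ∀ z ∈ Sgen σ, ∃ w : G.V1, σ.pw w * z = z := by
  rintro _ ⟨e, f, g, h, h1, h2, h3, rfl⟩
  refine ⟨G.r e, ?_⟩
  simp only [mul_sub, ← mul_assoc]
  rw [σ.pw_rhoExt e f h1, σ.pw_rhoExt e g (h1.trans h2)]

lemma I_smul (k : K) (x : LW)
    (hx : x ∈ TwoSidedIdeal.span (Sgen σ ∪ star '' Sgen σ)) :
    k • x ∈ TwoSidedIdeal.span (Sgen σ ∪ star '' Sgen σ) := by
  set I := TwoSidedIdeal.span (Sgen σ ∪ star '' Sgen σ) with hI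
  have hgen : ∀ z ∈ Sgen σ ∪ star '' Sgen σ, z ∈ Sgen σ := by
    rintro z (hz | ⟨z₀, hz₀, rfl⟩)
    · exact hz
    · exact Sgen_star _ hz₀
  have hsmul_gen : ∀ z ∈ Sgen σ, ∀ k : K, k • z ∈ I := by
    intro z hz k
    obtain ⟨w, hw⟩ := Sgen_pw_left z hz
    rw [← hw, ← smul_mul_assoc]
    exact I.mul_mem_left _ _ (TwoSidedIdeal.subset_span (Or.inl hz))
  let I' : TwoSidedIdeal LW := TwoSidedIdeal.mk'
    {x : LW | x ∈ I ∧ ∀ k : K, k • x ∈ I}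
    ⟨I.zero_mem, fun k => by rw [smul_zero]; exact I.zero_mem⟩
    (fun {x y} hx hy => ⟨I.add_mem hx.1 hy.1,
      fun k => by rw [smul_add]; exact I.add_mem (hx.2 k) (hy.2 k)⟩)
    (fun {x} hx => ⟨I.neg_mem hx.1, fun k => by rw [smul_neg]; exact I.neg_mem (hx.2 k)⟩)
    (fun {x y} hy => ⟨I.mul_mem_left _ _ hy.1,
      fun k => by rw [← mul_smul_comm]; exact I.mul_mem_left _ _ (hy.2 k)⟩)
    (fun {x y} hx => ⟨I.mul_mem_right _ _ hx.1,
      fun k => by rw [← smul_mul_assoc]; exact I.mul_mem_right _ _ (hx.2 k)⟩)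
  have hx' : x ∈ I' := by
    rw [TwoSidedIdeal.mem_span_iff] at hx
    exact hx I' (fun z hz =>
      (TwoSidedIdeal.mem_mk' _ _ _ _ _ _ z).mpr
        ⟨TwoSidedIdeal.subset_span hz, hsmul_gen z (hgen z hz)⟩)
  exact ((TwoSidedIdeal.mem_mk' _ _ _ _ _ _ x).mp hx').2 k

end Aux4


/-- **Statement 3.**  Under the identification of `LW(E,C)` with the corner
`W L(E,C) W` (via the embedding `φ`), the ideal `J` of `L(E,C)` generated by the
commutators `[ee*, ff*]` intersects `LW(E,C)` exactly in the `*`-ideal `I` of `LW(E,C)`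
generated by the elements `ρ(e,f)ρ(f,g)ρ(g,h) − ρ(e,g)ρ(g,f)ρ(f,h)`,
over all `e,f,g,h` with the same source. -/
theorem statement3 (G : BipSepGraph) (hs : Function.Surjective G.s)
    (hr : Function.Surjective G.r) (hlf : ∀ v : G.V1, {e | G.r e = v}.Finite)
    (L : Type) [NonUnitalRing L] [Module K L] [SMulCommClass K L L] [IsScalarTower K L L]
    [StarRing L] [StarModule K L] (ρ : LPARep K G L) (hL : IsLPA K G L ρ)
    (LW : Type) [NonUnitalRing LW] [Module K LW] [SMulCommClass K LW LW]
    [IsScalarTower K LW LW] [StarRing LW] [StarModule K LW]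
    (σ : LWRep K G LW) (hLW : IsLW K G LW σ)
    -- the identification of `LW(E,C)` with the corner `W L(E,C) W`:
    (φ : LW →⋆ₙₐ[K] L) (hinj : Function.Injective φ)
    (hrange : Set.range φ = (Submodule.span K
      {x : L | ∃ (u w : G.V1) (a : L), x = ρ.pv (Sum.inr u) * a * ρ.pv (Sum.inr w)} :
        Submodule K L))
    (hφw : ∀ w : G.V1, φ (σ.pw w) = ρ.pv (Sum.inr w))
    (hφρ : ∀ e f, G.s e = G.s f → ¬ G.c e f → φ (σ.rho e f) = star (ρ.ge e) * ρ.ge f) :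
    -- `J` : the ideal of `L(E,C)` generated by the commutators `[ee*, ff*]`
    letI J : TwoSidedIdeal L := TwoSidedIdeal.span
      {z : L | ∃ e f : G.E, z = (ρ.ge e * star (ρ.ge e)) * (ρ.ge f * star (ρ.ge f)) -
        (ρ.ge f * star (ρ.ge f)) * (ρ.ge e * star (ρ.ge e))}
    -- `I` : the `*`-ideal of `LW(E,C)` generated by the elements
    -- `ρ(e,f)ρ(f,g)ρ(g,h) − ρ(e,g)ρ(g,f)ρ(f,h)`
    letI S : Set LW := {z : LW | ∃ e f g h : G.E,
      G.s e = G.s f ∧ G.s f = G.s g ∧ G.s g = G.s h ∧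
      z = σ.rhoExt K e f * σ.rhoExt K f g * σ.rhoExt K g h -
        σ.rhoExt K e g * σ.rhoExt K g f * σ.rhoExt K f h}
    letI I : TwoSidedIdeal LW := TwoSidedIdeal.span (S ∪ star '' S)
    ∀ x : LW, φ x ∈ J ↔ x ∈ I := by
  intro x
  let J : TwoSidedIdeal L := TwoSidedIdeal.span
    {z : L | ∃ e f : G.E, z = (ρ.ge e * star (ρ.ge e)) * (ρ.ge f * star (ρ.ge f)) -
      (ρ.ge f * star (ρ.ge f)) * (ρ.ge e * star (ρ.ge e))}
  let S : Set LW := {z : LW | ∃ e f g h : G.E,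
    G.s e = G.s f ∧ G.s f = G.s g ∧ G.s g = G.s h ∧
    z = σ.rhoExt K e f * σ.rhoExt K f g * σ.rhoExt K g h -
      σ.rhoExt K e g * σ.rhoExt K g f * σ.rhoExt K f h}
  let I : TwoSidedIdeal LW := TwoSidedIdeal.span (S ∪ star '' S)
  show φ x ∈ J ↔ x ∈ I
  have htop := ρ.adjoin_top hL
  have hcorners := fun a : L => corners σ hs hrange hφw hφρ htop a
  have hRE : ∀ e f : G.E, G.s e = G.s f → φ (σ.rhoExt K e f) = star (ρ.ge e) * ρ.ge f :=
    rhoExt_phi hφw hφρ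
  constructor
  · -- hard direction : `φ x ∈ J → x ∈ I`
    intro hx
    let φI : Submodule K L :=
      { carrier := ⇑φ '' (I : Set LW)
        add_mem' := by
          rintro _ _ ⟨a, ha, rfl⟩ ⟨b, hb, rfl⟩
          exact ⟨a + b, I.add_mem ha hb, map_add φ a b⟩
        zero_mem' := ⟨0, I.zero_mem, map_zero φ⟩
        smul_mem' := by
          rintro k _ ⟨a, ha, rfl⟩
          exact ⟨k • a, I_smul k a ha, map_smul φ k a⟩ }
    let Cset : Set L := {y | ∀ u w : G.V1,
      (ρ.pv (inr u) * (y * ρ.pv (inr w)) ∈ φI) ∧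
      (∀ b, ρ.pv (inr u) * (y * (b * ρ.pv (inr w))) ∈ φI) ∧
      (∀ a, ρ.pv (inr u) * (a * (y * ρ.pv (inr w))) ∈ φI) ∧
      (∀ a b, ρ.pv (inr u) * (a * (y * (b * ρ.pv (inr w)))) ∈ φI)}
    have hC0 : (0:L) ∈ Cset := by
      intro u w
      refine ⟨?_, fun b => ?_, fun a => ?_, fun a b => ?_⟩ <;>
        · simp only [zero_mul, mul_zero]
          exact φI.zero_mem
    have hCadd : ∀ {y z : L}, y ∈ Cset → z ∈ Cset → y + z ∈ Cset := by
      intro y z hy hz u w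
      refine ⟨?_, fun b => ?_, fun a => ?_, fun a b => ?_⟩
      · simpa only [add_mul, mul_add] using φI.add_mem (hy u w).1 (hz u w).1
      · simpa only [add_mul, mul_add] using φI.add_mem ((hy u w).2.1 b) ((hz u w).2.1 b)
      · simpa only [add_mul, mul_add] using φI.add_mem ((hy u w).2.2.1 a) ((hz u w).2.2.1 a)
      · simpa only [add_mul, mul_add] using φI.add_mem ((hy u w).2.2.2 a b) ((hz u w).2.2.2 a b)
    have hCneg : ∀ {y : L}, y ∈ Cset → -y ∈ Cset := by
      intro y hy u w
      refine ⟨?_, fun b => ?_, fun a => ?_, fun a b => ?_⟩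
      · simpa only [neg_mul, mul_neg] using φI.neg_mem (hy u w).1
      · simpa only [neg_mul, mul_neg] using φI.neg_mem ((hy u w).2.1 b)
      · simpa only [neg_mul, mul_neg] using φI.neg_mem ((hy u w).2.2.1 a)
      · simpa only [neg_mul, mul_neg] using φI.neg_mem ((hy u w).2.2.2 a b)
    have hCl : ∀ {c y : L}, y ∈ Cset → c * y ∈ Cset := by
      intro c y hy u w
      refine ⟨?_, fun b => ?_, fun a => ?_, fun a b => ?_⟩
      · simpa only [mul_assoc] using (hy u w).2.2.1 c
      · simpa only [mul_assoc] using (hy u w).2.2.2 c b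
      · simpa only [mul_assoc] using (hy u w).2.2.1 (a * c)
      · simpa only [mul_assoc] using (hy u w).2.2.2 (a * c) b
    have hCr : ∀ {y c : L}, y ∈ Cset → y * c ∈ Cset := by
      intro y c hy u w
      refine ⟨?_, fun b => ?_, fun a => ?_, fun a b => ?_⟩
      · simpa only [mul_assoc] using (hy u w).2.1 c
      · simpa only [mul_assoc] using (hy u w).2.1 (c * b)
      · simpa only [mul_assoc] using (hy u w).2.2.2 a c
      · simpa only [mul_assoc] using (hy u w).2.2.2 a (c * b)
    let J' : TwoSidedIdeal L := TwoSidedIdeal.mk' Cset hC0 hCadd hCneg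
      (fun {c y} hy => hCl hy) (fun {y c} hy => hCr hy)
    -- the commutator generators lie in `Cset`
    have hgenC : ∀ p q : G.E,
        ((ρ.ge p * star (ρ.ge p)) * (ρ.ge q * star (ρ.ge q)) -
          (ρ.ge q * star (ρ.ge q)) * (ρ.ge p * star (ρ.ge p))) ∈ Cset := by
      intro p q
      set t : L := (ρ.ge p * star (ρ.ge p)) * (ρ.ge q * star (ρ.ge q)) -
          (ρ.ge q * star (ρ.ge q)) * (ρ.ge p * star (ρ.ge p)) with hT
      by_cases hpq : G.s p = G.s q
      · -- the common source
        have h1 : ρ.pv (inl (G.s p)) * ρ.ge p = ρ.ge p := ρ.src_mul p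
        have h2 : ρ.pv (inl (G.s p)) * ρ.ge q = ρ.ge q := by rw [hpq]; exact ρ.src_mul q
        have h3 : star (ρ.ge p) * ρ.pv (inl (G.s p)) = star (ρ.ge p) := ρ.star_ge_pv p
        have h4 : star (ρ.ge q) * ρ.pv (inl (G.s p)) = star (ρ.ge q) := by
          rw [hpq]; exact ρ.star_ge_pv q
        have htl : ρ.pv (inl (G.s p)) * t = t := by
          rw [hT]
          simp only [mul_sub, ← mul_assoc, h1, h2]
        have htr : t * ρ.pv (inl (G.s p)) = t := by
          rw [hT]
          simp only [sub_mul, mul_assoc, h3, h4]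
        have h0l : ∀ u : G.V1, ρ.pv (inr u) * t = 0 := by
          intro u
          rw [← htl, ← mul_assoc, ρ.pv_ir_il, zero_mul]
        have h0r : ∀ w : G.V1, t * ρ.pv (inr w) = 0 := by
          intro w
          rw [← htr, mul_assoc, ρ.pv_il_ir, mul_zero]
        intro u w
        refine ⟨?_, fun b => ?_, fun a => ?_, fun a b => ?_⟩
        · rw [← mul_assoc, h0l, zero_mul]; exact φI.zero_mem
        · rw [← mul_assoc, h0l, zero_mul]; exact φI.zero_mem
        · rw [h0r, mul_zero, mul_zero]; exact φI.zero_mem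
        · -- the interesting clause
          have ht2 : t = ρ.pv (inl (G.s p)) * (t * ρ.pv (inl (G.s p))) := by
            rw [htr, htl]
          have heq : ρ.pv (inr u) * (a * (t * (b * ρ.pv (inr w)))) =
              (ρ.pv (inr u) * a * ρ.pv (inl (G.s p))) * t *
                (ρ.pv (inl (G.s p)) * b * ρ.pv (inr w)) := by
            conv_lhs => rw [ht2]
            simp only [mul_assoc]
          rw [heq]
          refine span_sandwich ?_ ((hcorners a).1 u (G.s p)) ((hcorners b).2.1 (G.s p) w)
          rintro _ ⟨x, e, he, rfl⟩ _ ⟨y, g, hg, rfl⟩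
          set z₀ : LW := σ.rhoExt K e p * σ.rhoExt K p q * σ.rhoExt K q g -
              σ.rhoExt K e q * σ.rhoExt K q p * σ.rhoExt K p g with hz₀def
          have hz₀S : z₀ ∈ S := ⟨e, p, q, g, he, hpq, hpq.symm.trans hg.symm, rfl⟩
          have hmid : φ z₀ = star (ρ.ge e) * t * ρ.ge g := by
            rw [hz₀def, hT, map_sub, map_mul, map_mul, map_mul, map_mul,
              hRE e p he, hRE p q hpq, hRE q g (hpq.symm.trans hg.symm),
              hRE e q (he.trans hpq), hRE q p hpq.symm, hRE p g (hg.symm ▸ rfl : G.s p = G.s g)]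
            simp only [mul_sub, sub_mul, mul_assoc]
          have hfin : (φ x * star (ρ.ge e)) * t * (ρ.ge g * φ y) = φ (x * z₀ * y) := by
            rw [map_mul, map_mul, hmid]
            simp only [mul_assoc]
          rw [hfin]
          exact ⟨x * z₀ * y,
            I.mul_mem_right _ _ (I.mul_mem_left _ _
              (TwoSidedIdeal.subset_span (Or.inl hz₀S))), rfl⟩
      · -- sources differ: the commutator vanishes
        have h6 : ρ.pv (inl (G.s p)) * ρ.ge q = 0 := by
          conv_lhs => rw [← ρ.src_mul q]
          rw [← mul_assoc, ρ.pv_orth _ _ (by simpa using hpq), zero_mul]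
        have h5 : star (ρ.ge p) * ρ.ge q = 0 := by
          rw [← ρ.star_ge_pv p, mul_assoc, h6, mul_zero]
        have h8 : ρ.pv (inl (G.s q)) * ρ.ge p = 0 := by
          conv_lhs => rw [← ρ.src_mul p]
          rw [← mul_assoc, ρ.pv_orth _ _ (by simpa using fun h => hpq h.symm), zero_mul]
        have h7 : star (ρ.ge q) * ρ.ge p = 0 := by
          rw [← ρ.star_ge_pv q, mul_assoc, h8, mul_zero]
        have hA : (ρ.ge p * star (ρ.ge p)) * (ρ.ge q * star (ρ.ge q)) = 0 := by
          rw [mul_assoc (ρ.ge p), ← mul_assoc (star (ρ.ge p)), h5, zero_mul, mul_zero]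
        have hB : (ρ.ge q * star (ρ.ge q)) * (ρ.ge p * star (ρ.ge p)) = 0 := by
          rw [mul_assoc (ρ.ge q), ← mul_assoc (star (ρ.ge q)), h7, zero_mul, mul_zero]
        have ht0 : t = 0 := by rw [hT, hA, hB, sub_zero]
        rw [ht0]
        exact hC0
    -- `φ x` satisfies the corner clauses
    have hxC : φ x ∈ Cset := by
      rw [TwoSidedIdeal.mem_span_iff] at hx
      have := hx J' (by
        rintro z ⟨p, q, rfl⟩
        exact (TwoSidedIdeal.mem_mk' _ _ _ _ _ _ _).mpr (hgenC p q))
      exact (TwoSidedIdeal.mem_mk' _ _ _ _ _ _ _).mp this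
    -- a finite family of projections fixing `φ x`
    have sumproj_left : ∀ (F : Finset G.V1) (u : G.V1), u ∈ F → ∀ y : L,
        ρ.pv (inr u) * y = y → (∑ z ∈ F, ρ.pv (inr z)) * y = y := by
      intro F u hu y hy
      rw [Finset.sum_mul, Finset.sum_eq_single u]
      · exact hy
      · intro z _ hne
        rw [← hy, ← mul_assoc, ρ.pv_orth _ _ (by simpa using hne), zero_mul]
      · intro h; exact absurd hu h
    have sumproj_right : ∀ (F : Finset G.V1) (w : G.V1), w ∈ F → ∀ y : L,
        y * ρ.pv (inr w) = y → y * (∑ z ∈ F, ρ.pv (inr z)) = y := by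
      intro F w hw y hy
      rw [Finset.mul_sum, Finset.sum_eq_single w]
      · exact hy
      · intro z _ hne
        rw [← hy, mul_assoc, ρ.pv_orth _ _ (by simpa using fun h => hne h.symm), mul_zero]
      · intro h; exact absurd hw h
    have hxF : ∃ F : Finset G.V1,
        (∑ z ∈ F, ρ.pv (inr z)) * φ x * (∑ z ∈ F, ρ.pv (inr z)) = φ x := by
      have hxr : φ x ∈ Submodule.span K
          {y : L | ∃ (u w : G.V1) (a : L), y = ρ.pv (inr u) * a * ρ.pv (inr w)} := by
        have : φ x ∈ Set.range ⇑φ := ⟨x, rfl⟩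
        rwa [hrange] at this
      have main : ∀ y ∈ Submodule.span K
          {y : L | ∃ (u w : G.V1) (a : L), y = ρ.pv (inr u) * a * ρ.pv (inr w)},
          ∃ F : Finset G.V1, ∀ F' : Finset G.V1, F ⊆ F' →
            (∑ z ∈ F', ρ.pv (inr z)) * y * (∑ z ∈ F', ρ.pv (inr z)) = y := by
        intro y hy
        refine Submodule.span_induction ?_ ?_ ?_ ?_ hy
        · rintro _ ⟨u, w, a, rfl⟩
          refine ⟨{u, w}, fun F' hF' => ?_⟩
          have hu : u ∈ F' := hF' (by simp)
          have hw : w ∈ F' := hF' (by simp)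
          rw [sumproj_left F' u hu _ (by
            simp only [← mul_assoc, ρ.pv_idem]),
            sumproj_right F' w hw _ (by
            simp only [mul_assoc]
            rw [ρ.pv_idem])]
        · exact ⟨∅, fun F' _ => by rw [mul_zero, zero_mul]⟩
        · rintro y z _ _ ⟨F₁, hF₁⟩ ⟨F₂, hF₂⟩
          refine ⟨F₁ ∪ F₂, fun F' hF' => ?_⟩
          rw [mul_add, add_mul, hF₁ F' (Finset.union_subset_iff.mp hF').1,
            hF₂ F' (Finset.union_subset_iff.mp hF').2]
        · rintro k y _ ⟨F₁, hF₁⟩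
          refine ⟨F₁, fun F' hF' => ?_⟩
          rw [mul_smul_comm, smul_mul_assoc, hF₁ F' hF']
      obtain ⟨F, hF⟩ := main _ hxr
      exact ⟨F, hF F subset_rfl⟩
    obtain ⟨F, hF⟩ := hxF
    have hexp : φ x = ∑ u ∈ F, ∑ w ∈ F, ρ.pv (inr u) * φ x * ρ.pv (inr w) := by
      conv_lhs => rw [← hF]
      rw [Finset.sum_mul, Finset.sum_mul]
      refine Finset.sum_congr rfl fun u _ => ?_
      rw [Finset.mul_sum]
    have hφxI : φ x ∈ φI := by
      rw [hexp]
      refine Submodule.sum_mem _ fun u _ => Submodule.sum_mem _ fun w _ => ?_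
      have := (hxC u w).1
      simpa only [mul_assoc] using this
    obtain ⟨ι, hι, hιeq⟩ := hφxI
    rwa [← hinj hιeq]
  · -- easy direction : `x ∈ I → φ x ∈ J`
    intro hx
    have hSJ : ∀ z ∈ Sgen σ, φ z ∈ J := by
      rintro _ ⟨e, f, g, h, h1, h2, h3, rfl⟩
      have key : φ (σ.rhoExt K e f * σ.rhoExt K f g * σ.rhoExt K g h -
          σ.rhoExt K e g * σ.rhoExt K g f * σ.rhoExt K f h) =
          star (ρ.ge e) * ((ρ.ge f * star (ρ.ge f)) * (ρ.ge g * star (ρ.ge g)) -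
            (ρ.ge g * star (ρ.ge g)) * (ρ.ge f * star (ρ.ge f))) * ρ.ge h := by
        rw [map_sub, map_mul, map_mul, map_mul, map_mul,
          hRE e f h1, hRE f g h2, hRE g h h3,
          hRE e g (h1.trans h2), hRE g f h2.symm, hRE f h (h2.trans h3)]
        simp only [mul_sub, sub_mul, mul_assoc]
      rw [key]
      exact J.mul_mem_right _ _ (J.mul_mem_left _ _
        (TwoSidedIdeal.subset_span ⟨f, g, rfl⟩))
    let Jc : TwoSidedIdeal LW := TwoSidedIdeal.mk' {y : LW | φ y ∈ J}
      (by simp only [Set.mem_setOf_eq, map_zero]; exact J.zero_mem)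
      (fun {a b} ha hb => by
        simp only [Set.mem_setOf_eq, map_add] at *
        exact J.add_mem ha hb)
      (fun {a} ha => by
        simp only [Set.mem_setOf_eq, map_neg] at *
        exact J.neg_mem ha)
      (fun {a b} hb => by
        simp only [Set.mem_setOf_eq, map_mul] at *
        exact J.mul_mem_left _ _ hb)
      (fun {a b} ha => by
        simp only [Set.mem_setOf_eq, map_mul] at *
        exact J.mul_mem_right _ _ ha)
    rw [TwoSidedIdeal.mem_span_iff] at hx
    have := hx Jc (by
      rintro z (hz | ⟨z₀, hz₀, rfl⟩)
      · exact (TwoSidedIdeal.mem_mk' _ _ _ _ _ _ _).mpr (hSJ z hz)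
      · exact (TwoSidedIdeal.mem_mk' _ _ _ _ _ _ _).mpr (hSJ _ (Sgen_star z₀ hz₀)))
    exact (TwoSidedIdeal.mem_mk' {y : LW | φ y ∈ J} _ _ _ _ _ x).mp this
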